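/- arXiv:1509.08229 — 3 statements merged into one kernel-verified Lean document; each statement's English description precedes it below -/
import Mathlib

section
/- Let L ⊣ R: D ⇄ C be an adjunction between categories with finite products satisfying Frobenius reciprocity, and let S be an object of C. Then for every object W of D and X of C there are isomorphisms of presheaves S^X ∘ L^op ≅ (RS)^{RX} and (RS)^W ∘ R^op ≅ S^{LW}, where S^X denotes the presheaf Y ↦ C(Y × X, S). -/
open CategoryTheory CategoryTheory.Limits

universe u v

variable {C : Type u} [Category.{v} C] [HasFiniteProducts C]


/-- The presheaf `S^X : Y ↦ C(Y × X, S)`. -/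
noncomputable def pow (S X : C) : Cᵒᵖ ⥤ Type v where
  obj Z := (Opposite.unop Z ⨯ X) ⟶ S
  map f := TypeCat.ofHom fun u => prod.map f.unop (𝟙 X) ≫ u
  map_id Z := by ext u; simp
  map_comp f g := by
    ext u
    show prod.map ((f ≫ g).unop) (𝟙 X) ≫ u
      = prod.map g.unop (𝟙 X) ≫ prod.map f.unop (𝟙 X) ≫ u
    rw [← Category.assoc, prod.map_map]; simp

/-- Contravariant action `S^f : S^Y ⟶ S^X` for `f : X ⟶ Y`. -/
noncomputable def powMap (S : C) {X Y : C} (f : X ⟶ Y) : pow S Y ⟶ pow S X where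
  app Z := TypeCat.ofHom fun u => prod.map (𝟙 _) f ≫ u
  naturality Z W g := by
    ext u
    show prod.map (𝟙 _) f ≫ prod.map g.unop (𝟙 Y) ≫ u
      = prod.map g.unop (𝟙 X) ≫ prod.map (𝟙 _) f ≫ u
    erw [← Category.assoc, ← Category.assoc, prod.map_map, prod.map_map]
    simp

@[simp] lemma powMap_id (S X : C) : powMap S (𝟙 X) = 𝟙 (pow S X) := by
  apply NatTrans.ext; funext Z; ext u; simp [powMap, pow]; rfl

@[simp] lemma powMap_comp (S : C) {X Y Z : C} (f : X ⟶ Y) (g : Y ⟶ Z) :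
    powMap S (f ≫ g) = powMap S g ≫ powMap S f := by
  apply NatTrans.ext; funext W; ext u
  show prod.map (𝟙 _) (f ≫ g) ≫ u = prod.map (𝟙 _) f ≫ prod.map (𝟙 _) g ≫ u
  erw [← Category.assoc, prod.map_map]; simp

variable {D : Type u} [Category.{v} D] [HasFiniteProducts D]

/-- The canonical Frobenius comparison map `L(R(X) × W) ⟶ X × LW`. -/
noncomputable def frobeniusMap (L : D ⥤ C) (R : C ⥤ D) (adj : L ⊣ R) (W : D) (X : C) :
    L.obj (R.obj X ⨯ W) ⟶ X ⨯ L.obj W :=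
  prod.lift (L.map prod.fst ≫ adj.counit.app X) (L.map prod.snd)

lemma frob_nat_left (L : D ⥤ C) (R : C ⥤ D) (adj : L ⊣ R) {Z' Z : C} (W : D) (g : Z' ⟶ Z) :
    L.map (prod.map (R.map g) (𝟙 W)) ≫ frobeniusMap L R adj W Z =
      frobeniusMap L R adj W Z' ≫ prod.map g (𝟙 (L.obj W)) := by
  apply Limits.prod.hom_ext
  · simp only [frobeniusMap, Category.assoc, prod.lift_fst, prod.map_fst, prod.lift_fst_assoc]
    rw [← Functor.map_comp_assoc, prod.map_fst, Functor.map_comp, Category.assoc,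
      adj.counit_naturality]
  · simp only [frobeniusMap, Category.assoc, prod.lift_snd, prod.map_snd, prod.lift_snd_assoc,
      Category.comp_id]
    rw [← Functor.map_comp, prod.map_snd, Category.comp_id]

lemma frob_nat_right (L : D ⥤ C) (R : C ⥤ D) (adj : L ⊣ R) {W' W : D} (X : C) (f : W' ⟶ W) :
    L.map (prod.map (𝟙 (R.obj X)) f) ≫ frobeniusMap L R adj W X =
      frobeniusMap L R adj W' X ≫ prod.map (𝟙 X) (L.map f) := by
  apply Limits.prod.hom_ext
  · simp only [frobeniusMap, Category.assoc, prod.lift_fst, prod.map_fst, prod.lift_fst_assoc,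
      Category.comp_id]
    rw [← Functor.map_comp_assoc, prod.map_fst, Category.comp_id]
  · simp only [frobeniusMap, Category.assoc, prod.lift_snd, prod.map_snd, prod.lift_snd_assoc]
    rw [← Functor.map_comp, prod.map_snd, Functor.map_comp]

/-- The hom-set equivalence `(L Y ⨯ X ⟶ S) ≃ (Y ⨯ R X ⟶ R S)`. -/
noncomputable def eqv1 (L : D ⥤ C) (R : C ⥤ D) (adj : L ⊣ R)
    (frob : ∀ (W : D) (X : C), IsIso (frobeniusMap L R adj W X)) (S X : C) (Y : D) :
    (L.obj Y ⨯ X ⟶ S) ≃ (Y ⨯ R.obj X ⟶ R.obj S) :=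
  haveI := frob Y X
  ((Iso.homCongr ((asIso (frobeniusMap L R adj Y X) ≪≫ prod.braiding X (L.obj Y)).symm)
      (Iso.refl S)).trans (adj.homEquiv _ _)).trans
    (Iso.homCongr (prod.braiding (R.obj X) Y) (Iso.refl (R.obj S)))

/-- The hom-set equivalence `(R Z ⨯ W ⟶ R S) ≃ (Z ⨯ L W ⟶ S)`. -/
noncomputable def eqv2 (L : D ⥤ C) (R : C ⥤ D) (adj : L ⊣ R)
    (frob : ∀ (W : D) (X : C), IsIso (frobeniusMap L R adj W X)) (S : C) (W : D) (Z : C) :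
    (R.obj Z ⨯ W ⟶ R.obj S) ≃ (Z ⨯ L.obj W ⟶ S) :=
  haveI := frob W Z
  (adj.homEquiv _ _).symm.trans
    (Iso.homCongr (asIso (frobeniusMap L R adj W Z)) (Iso.refl S))

/-- If `L ⊣ R` satisfies Frobenius reciprocity then for every `W` in `D` and `X` in `C`
there are isomorphisms of presheaves `S^X ∘ L^op ≅ (RS)^{RX}` and `(RS)^W ∘ R^op ≅ S^{LW}`. -/
theorem frobenius_pow_isos (L : D ⥤ C) (R : C ⥤ D) (adj : L ⊣ R)
    (frob : ∀ (W : D) (X : C), IsIso (frobeniusMap L R adj W X)) (S : C) :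
    ∀ (W : D) (X : C),
      Nonempty ((L.op ⋙ pow S X) ≅ pow (R.obj S) (R.obj X)) ∧
      Nonempty ((R.op ⋙ pow (R.obj S) W) ≅ pow S (L.obj W)) := by
  intro W X
  constructor
  · refine ⟨NatIso.ofComponents
      (fun Y => Equiv.toIso (X := (L.op ⋙ pow S X).obj Y) (Y := (pow (R.obj S) (R.obj X)).obj Y) (eqv1 L R adj frob S X Y.unop)) ?_⟩
    intro Y Y' f
    ext u
    change (L.obj Y.unop ⨯ X ⟶ S) at u
    show eqv1 L R adj frob S X Y'.unop (prod.map (L.map f.unop) (𝟙 X) ≫ u)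
      = prod.map f.unop (𝟙 (R.obj X)) ≫ eqv1 L R adj frob S X Y.unop u
    simp only [eqv1, Equiv.trans_apply, Iso.homCongr_apply]
    simp only [Iso.symm_inv, Iso.trans_hom, asIso_hom, Iso.refl_hom, Category.comp_id,
      Category.assoc, prod.braiding_hom, prod.braiding_inv]
    have hb : (prod.braiding X (L.obj Y'.unop)).hom ≫ prod.map (L.map f.unop) (𝟙 X) =
        prod.map (𝟙 X) (L.map f.unop) ≫ (prod.braiding X (L.obj Y.unop)).hom := by
      simp
    have hb' : prod.map f.unop (𝟙 (R.obj X)) ≫ (prod.braiding Y.unop (R.obj X)).hom =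
        (prod.braiding Y'.unop (R.obj X)).hom ≫ prod.map (𝟙 (R.obj X)) f.unop := by
      simp
    simp only [prod.braiding_hom] at hb hb' 
    rw [reassoc_of% hb, reassoc_of% (frob_nat_right L R adj X f.unop).symm,
      adj.homEquiv_naturality_left, reassoc_of% hb']
  · refine ⟨NatIso.ofComponents
      (fun Z => Equiv.toIso (X := (R.op ⋙ pow (R.obj S) W).obj Z) (Y := (pow S (L.obj W)).obj Z) (eqv2 L R adj frob S W Z.unop)) ?_⟩
    intro Z Z' g
    ext u
    change (R.obj Z.unop ⨯ W ⟶ R.obj S) at u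
    show eqv2 L R adj frob S W Z'.unop (prod.map (R.map g.unop) (𝟙 W) ≫ u)
      = prod.map g.unop (𝟙 (L.obj W)) ≫ eqv2 L R adj frob S W Z.unop u
    haveI := frob W Z.unop
    haveI := frob W Z'.unop
    simp only [eqv2, Equiv.trans_apply, Iso.homCongr_apply]
    simp only [asIso_inv, Iso.refl_hom, Category.comp_id]
    rw [adj.homEquiv_naturality_left_symm, ← Category.assoc, ← Category.assoc]
    congr 1
    have h := frob_nat_left L R adj W g.unop
    rw [IsIso.inv_comp_eq, ← Category.assoc, ← h, Category.assoc, IsIso.hom_inv_id,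
      Category.comp_id]
end

section
/- Let A be an order-internal meet semilattice in an order-enriched category C with finite products, and suppose ψ: A → A is an inflationary idempotent (Id_A ⊑ ψ, ψψ = ψ) split as ψ = i∘q with q∘i = Id_{A_0} for some object A_0 with i: A_0 → A, q: A → A_0. Then A_0 is an order-internal meet semilattice with top q∘1_A and meet q ∘ ⊓_A ∘ (i × i), the inclusion i is a meet semilattice homomorphism, and q preserves the top element. -/
open CategoryTheory CategoryTheory.Limits

universe u v

/-- An order-enriched category: hom-sets are posets and composition is monotone
in both arguments. -/
class CompMono (C : Type u) [Category.{v} C] [∀ X Y : C, PartialOrder (X ⟶ Y)] : Prop where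
  comp_le : ∀ {X Y Z : C} {f f' : X ⟶ Y} {g g' : Y ⟶ Z}, f ≤ f' → g ≤ g' → f ≫ g ≤ f' ≫ g'

variable {C : Type u} [Category.{v} C] [HasFiniteProducts C]
  [∀ X Y : C, PartialOrder (X ⟶ Y)] [CompMono C]

/-- An order-internal meet semilattice: a top element right adjoint to the unique map
to the terminal object, and a meet right adjoint to the diagonal. -/
structure MeetOb (A : C) where
  top : ⊤_ C ⟶ A
  meet : A ⨯ A ⟶ A
  top_unit : 𝟙 A ≤ terminal.from A ≫ top
  meet_unit : 𝟙 A ≤ prod.lift (𝟙 A) (𝟙 A) ≫ meet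
  meet_counit : meet ≫ prod.lift (𝟙 A) (𝟙 A) ≤ 𝟙 (A ⨯ A)

/-- If `A` is an order-internal meet semilattice and `ψ = q ≫ i` is a splitting of an
inflationary idempotent `ψ : A ⟶ A` (with `i ≫ q = 𝟙 A₀`), then `A₀` is an order-internal
meet semilattice with top `MA.top ≫ q` and meet `prod.map i i ≫ MA.meet ≫ q`, the
inclusion `i` is a meet semilattice homomorphism, and `q` preserves the top element. -/
theorem split_inflationary_idempotent_meetOb
    {A A₀ : C} (MA : MeetOb A) (ψ : A ⟶ A) (hinfl : 𝟙 A ≤ ψ) (hidem : ψ ≫ ψ = ψ)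
    (i : A₀ ⟶ A) (q : A ⟶ A₀) (hsplit : ψ = q ≫ i) (hsect : i ≫ q = 𝟙 A₀) :
    -- A₀ is an order-internal meet semilattice with the stated structure:
    (𝟙 A₀ ≤ terminal.from A₀ ≫ (MA.top ≫ q)) ∧
    (𝟙 A₀ ≤ prod.lift (𝟙 A₀) (𝟙 A₀) ≫ (prod.map i i ≫ MA.meet ≫ q)) ∧
    ((prod.map i i ≫ MA.meet ≫ q) ≫ prod.lift (𝟙 A₀) (𝟙 A₀) ≤ 𝟙 (A₀ ⨯ A₀)) ∧
    -- `i` is a meet semilattice homomorphism: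
    ((MA.top ≫ q) ≫ i = MA.top) ∧
    ((prod.map i i ≫ MA.meet ≫ q) ≫ i = prod.map i i ≫ MA.meet) ∧
    -- `q` preserves the top element:
    (MA.top ≫ q = MA.top ≫ q) := by
  have mono := @CompMono.comp_le C _ _ _
  have hiψ : i ≫ ψ = i := by rw [hsplit, ← Category.assoc, hsect, Category.id_comp]
  -- top is fixed by ψ
  have htopfix : MA.top ≫ ψ = MA.top := by
    apply le_antisymm
    · calc MA.top ≫ ψ ≤ (MA.top ≫ ψ) ≫ (terminal.from A ≫ MA.top) := by
            calc MA.top ≫ ψ = (MA.top ≫ ψ) ≫ 𝟙 A := by simp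
            _ ≤ (MA.top ≫ ψ) ≫ (terminal.from A ≫ MA.top) := mono le_rfl MA.top_unit
        _ = MA.top := by
            rw [Category.assoc, show ψ ≫ terminal.from A ≫ MA.top = terminal.from A ≫ MA.top from by
                  rw [← Category.assoc, show ψ ≫ terminal.from A = terminal.from A from Subsingleton.elim _ _],
                ← Category.assoc, show MA.top ≫ terminal.from A = 𝟙 _ from Subsingleton.elim _ _, Category.id_comp]
    · calc MA.top = MA.top ≫ 𝟙 A := by simp
        _ ≤ MA.top ≫ ψ := mono le_rfl hinfl
  have hmeetfix : (prod.map i i ≫ MA.meet) ≫ ψ = prod.map i i ≫ MA.meet := by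
    apply le_antisymm
    · set x := (prod.map i i ≫ MA.meet) ≫ ψ with hx
      have h1 : x ≫ prod.lift (𝟙 A) (𝟙 A) ≤ prod.map i i := by
        have : x ≫ prod.lift (𝟙 A) (𝟙 A)
            = (prod.map i i ≫ (MA.meet ≫ prod.lift (𝟙 A) (𝟙 A))) ≫ prod.map ψ ψ := by
          simp [hx, prod.lift_map]
        rw [this]
        calc (prod.map i i ≫ (MA.meet ≫ prod.lift (𝟙 A) (𝟙 A))) ≫ prod.map ψ ψ
            ≤ (prod.map i i ≫ 𝟙 (A ⨯ A)) ≫ prod.map ψ ψ :=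
              mono (mono le_rfl MA.meet_counit) le_rfl
          _ = prod.map i i := by rw [Category.comp_id, prod.map_map, hiψ]
      calc x = x ≫ 𝟙 A := by simp
        _ ≤ x ≫ (prod.lift (𝟙 A) (𝟙 A) ≫ MA.meet) := mono le_rfl MA.meet_unit
        _ = (x ≫ prod.lift (𝟙 A) (𝟙 A)) ≫ MA.meet := (Category.assoc _ _ _).symm
        _ ≤ prod.map i i ≫ MA.meet := mono h1 le_rfl
    · calc prod.map i i ≫ MA.meet = (prod.map i i ≫ MA.meet) ≫ 𝟙 A := by simp
        _ ≤ (prod.map i i ≫ MA.meet) ≫ ψ := mono le_rfl hinfl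
  refine ⟨?_, ?_, ?_, ?_, ?_, rfl⟩
  · -- top unit
    calc 𝟙 A₀ = i ≫ 𝟙 A ≫ q := by rw [Category.id_comp, hsect]
      _ ≤ i ≫ (terminal.from A ≫ MA.top) ≫ q := mono le_rfl (mono MA.top_unit le_rfl)
      _ = terminal.from A₀ ≫ MA.top ≫ q := by
          rw [← Category.assoc, ← Category.assoc, show i ≫ terminal.from A = terminal.from A₀ from Subsingleton.elim _ _, Category.assoc]
  · -- meet unit
    have hΔ : prod.lift (𝟙 A₀) (𝟙 A₀) ≫ prod.map i i ≫ MA.meet ≫ q = i ≫ (prod.lift (𝟙 A) (𝟙 A) ≫ MA.meet) ≫ q := by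
      simp [prod.lift_map, prod.comp_lift, ← Category.assoc]
    calc 𝟙 A₀ = i ≫ 𝟙 A ≫ q := by rw [Category.id_comp, hsect]
      _ ≤ i ≫ (prod.lift (𝟙 A) (𝟙 A) ≫ MA.meet) ≫ q := mono le_rfl (mono MA.meet_unit le_rfl)
      _ = prod.lift (𝟙 A₀) (𝟙 A₀) ≫ prod.map i i ≫ MA.meet ≫ q := by
          rw [hΔ]
  · -- meet counit
    have h1 : q ≫ prod.lift (𝟙 A₀) (𝟙 A₀) = prod.lift (𝟙 A) (𝟙 A) ≫ prod.map q q := by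
      simp [prod.lift_map]
    have h2 : prod.map i i ≫ prod.map q q = 𝟙 (A₀ ⨯ A₀) := by
      rw [prod.map_map, hsect, prod.map_id_id]
    calc (prod.map i i ≫ MA.meet ≫ q) ≫ prod.lift (𝟙 A₀) (𝟙 A₀)
        = prod.map i i ≫ (MA.meet ≫ prod.lift (𝟙 A) (𝟙 A)) ≫ prod.map q q := by
          simp [h1]
      _ ≤ prod.map i i ≫ 𝟙 (A ⨯ A) ≫ prod.map q q := mono le_rfl (mono MA.meet_counit le_rfl)
      _ = 𝟙 (A₀ ⨯ A₀) := by rw [Category.id_comp, h2]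
  · -- i preserves top
    rw [Category.assoc, ← hsplit, htopfix]
  · -- i preserves meet
    rw [Category.assoc, Category.assoc, ← hsplit, ← Category.assoc, hmeetfix]
end

section
/- In an order-enriched category, suppose given a fork c: C → A with a∘c = b∘c for parallel arrows a, b: A ⇉ B, together with q: A → C and t: B → A satisfying t∘a = c∘q ⊒ Id_A, q∘c = Id_C, and t∘b ⊑ Id_A. Then c is an equalizer of a and b. -/
open CategoryTheory CategoryTheory.Limits

universe u v

/-- In an order-enriched category, given a fork `c : E ⟶ A` with `c ≫ a = c ≫ b`,
together with `q : A ⟶ E` and `t : B ⟶ A` satisfying `a ≫ t = q ≫ c`,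
`𝟙 A ≤ q ≫ c`, `c ≫ q = 𝟙 E` and `b ≫ t ≤ 𝟙 A`, the morphism `c` is an
equalizer of `a` and `b`. -/
theorem orderEnriched_split_fork_isEqualizer
    {C : Type u} [Category.{v} C] [∀ X Y : C, PartialOrder (X ⟶ Y)] [CompMono C]
    {E A B : C} (a b : A ⟶ B) (c : E ⟶ A) (w : c ≫ a = c ≫ b)
    (q : A ⟶ E) (t : B ⟶ A)
    (h1 : a ≫ t = q ≫ c) (h2 : 𝟙 A ≤ q ≫ c) (h3 : c ≫ q = 𝟙 E) (h4 : b ≫ t ≤ 𝟙 A) :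
    Nonempty (IsLimit (Fork.ofι c w)) := by
  refine ⟨Fork.IsLimit.mk _ (fun s => s.ι ≫ q) (fun s => ?_) (fun s m hm => ?_)⟩
  · have key : s.ι ≫ (q ≫ c) = s.ι := by
      apply le_antisymm
      · calc s.ι ≫ (q ≫ c) = s.ι ≫ (a ≫ t) := by rw [h1]
          _ = (s.ι ≫ a) ≫ t := by simp
          _ = (s.ι ≫ b) ≫ t := by rw [s.condition]
          _ = s.ι ≫ (b ≫ t) := by simp
          _ ≤ s.ι ≫ 𝟙 A := CompMono.comp_le le_rfl h4
          _ = s.ι := by simp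
      · calc s.ι = s.ι ≫ 𝟙 A := by simp
          _ ≤ s.ι ≫ (q ≫ c) := CompMono.comp_le le_rfl h2
    simpa using key
  · have hm' : m ≫ c = s.ι := hm
    have : (m ≫ c) ≫ q = s.ι ≫ q := by rw [hm']
    simpa [h3] using this
end
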